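/- Fix a finite set X and a time horizon T. Two distributions μ, μ' ∈ Δ(C^{dc}) over dynamic choice functions are observationally equivalent if and only if μ − μ' lies in the Ryser subspace ℛ^{dc}. In particular, for any M ⊆ Δ(C^{dc}) and μ ∈ M, the set of distributions in M observationally equivalent to μ is exactly (μ + ℛ^{dc}) ∩ M. -/

import Mathlib

set_option linter.unusedSectionVars false

open scoped Classical

namespace Stmt9

variable {X : Type*} [Fintype X] [DecidableEq X] {T : ℕ}

/-- `μ` is a probability distribution over dynamic choice functions `{1,…,T} → X`
(encoded as `Fin T → X`). -/
def IsDist (μ : (Fin T → X) → ℝ) : Prop :=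
  (∀ c, 0 ≤ μ c) ∧ ∑ c : Fin T → X, μ c = 1

/-- Observational equivalence of distributions over dynamic choice functions: they
generate the same system of conditional choice probabilities, equivalently the same
first-period marginal and the same joint distribution of each consecutive pair of
choices. -/
def ObsEquivDC (μ μ' : (Fin T → X) → ℝ) : Prop :=
  (∀ (h : 0 < T) (x : X),
    (∑ c : Fin T → X, if c ⟨0, h⟩ = x then μ c else 0) =
      (∑ c : Fin T → X, if c ⟨0, h⟩ = x then μ' c else 0)) ∧
  (∀ (i : ℕ) (h : i + 1 < T) (x y : X),
    (∑ c : Fin T → X,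
        if c ⟨i, Nat.lt_of_succ_lt h⟩ = x ∧ c ⟨i + 1, h⟩ = y then μ c else 0) =
      (∑ c : Fin T → X,
        if c ⟨i, Nat.lt_of_succ_lt h⟩ = x ∧ c ⟨i + 1, h⟩ = y then μ' c else 0))

/-- The indicator (point mass) vector of a dynamic choice function. -/
noncomputable def ind (c₀ : Fin T → X) : (Fin T → X) → ℝ :=
  fun c => if c = c₀ then 1 else 0

/-- A Ryser swap for dynamic discrete choice: `c₁', c₂'` are obtained from a
`t`-compatible pair `c₁, c₂` (making the same choice in period `t - 1`; here `m = t - 1`)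
by exchanging their choices in the first `t - 1` periods. -/
def IsRyserSwapDC (R : (Fin T → X) → ℝ) : Prop :=
  ∃ (m : ℕ) (hm1 : 1 ≤ m) (hm : m < T) (c₁ c₂ c₁' c₂' : Fin T → X),
    c₁ ⟨m - 1, by omega⟩ = c₂ ⟨m - 1, by omega⟩ ∧
    (∀ j : Fin T, c₁' j = if (j : ℕ) < m then c₂ j else c₁ j) ∧
    (∀ j : Fin T, c₂' j = if (j : ℕ) < m then c₁ j else c₂ j) ∧
    R = ind c₁' + ind c₂' - ind c₁ - ind c₂

/-- The Ryser subspace for dynamic discrete choice. -/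
noncomputable def RyserSpaceDC (X : Type*) [Fintype X] [DecidableEq X] (T : ℕ) :
    Submodule ℝ ((Fin T → X) → ℝ) :=
  Submodule.span ℝ {R | IsRyserSwapDC R}

/-! ### Auxiliary machinery -/

/-- zero-marginal condition -/
def MZero (ν : (Fin T → X) → ℝ) : Prop :=
  (∀ (h : 0 < T) (x : X),
    (∑ c : Fin T → X, if c ⟨0, h⟩ = x then ν c else 0) = 0) ∧
  (∀ (i : ℕ) (h : i + 1 < T) (x y : X),
    (∑ c : Fin T → X,
        if c ⟨i, Nat.lt_of_succ_lt h⟩ = x ∧ c ⟨i + 1, h⟩ = y then ν c else 0) = 0)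

lemma obs_iff_mzero (μ μ' : (Fin T → X) → ℝ) : ObsEquivDC μ μ' ↔ MZero (μ - μ') := by
  have key : ∀ (P : (Fin T → X) → Prop) (_ : DecidablePred P),
      (∑ c : Fin T → X, if P c then (μ - μ') c else 0) =
      (∑ c : Fin T → X, if P c then μ c else 0) - (∑ c : Fin T → X, if P c then μ' c else 0) := by
    intro P inst
    rw [← Finset.sum_sub_distrib]
    refine Finset.sum_congr rfl fun c _ => ?_
    by_cases h : P c <;> simp [h]
  constructor
  · rintro ⟨h1, h2⟩
    exact ⟨fun h x => by rw [key _ (fun _ => inferInstance)]; rw [h1 h x]; ring,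
      fun i h x y => by rw [key _ (fun _ => inferInstance)]; rw [h2 i h x y]; ring⟩
  · rintro ⟨h1, h2⟩
    exact ⟨fun h x => sub_eq_zero.mp (by rw [← key _ (fun _ => inferInstance)]; exact h1 h x),
      fun i h x y => sub_eq_zero.mp (by rw [← key _ (fun _ => inferInstance)]; exact h2 i h x y)⟩

lemma mk_succ {n i : ℕ} (h : i + 1 < n + 1) :
    (⟨i + 1, h⟩ : Fin (n + 1)) = Fin.succ ⟨i, by omega⟩ := rfl

lemma sum_cons {M : Type*} [AddCommMonoid M] (f : (Fin (T + 1) → X) → M) :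
    ∑ c : Fin (T + 1) → X, f c = ∑ x : X, ∑ q : Fin T → X, f (Fin.cons x q) := by
  rw [← Equiv.sum_comp (Fin.consEquiv (fun _ => X)) f, Fintype.sum_prod_type]
  rfl

lemma sum_func_smul_ind (ν : (Fin T → X) → ℝ) :
    ∑ c : Fin T → X, ν c • ind c = ν := by
  funext c'
  rw [Finset.sum_apply]
  simp only [Pi.smul_apply, ind, smul_eq_mul, mul_ite, mul_one, mul_zero]
  have : ∀ c : Fin T → X, (if c' = c then ν c else 0) = if c = c' then ν c else 0 := by
    intro c
    by_cases h : c = c'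
    · subst h; simp
    · rw [if_neg (fun hh => h hh.symm), if_neg h]
  simp_rw [this]
  rw [Finset.sum_ite_eq' Finset.univ c' ν]
  simp

lemma sum_ite_ind (P : (Fin T → X) → Prop) (instP : DecidablePred P) (c₀ : Fin T → X) :
    (∑ c : Fin T → X, if P c then ind c₀ c else 0) = if P c₀ then 1 else 0 := by
  have : ∀ c : Fin T → X, (if P c then ind c₀ c else 0) =
      if c = c₀ then (if P c₀ then 1 else 0) else 0 := by
    intro c
    by_cases hc : c = c₀
    · subst hc; simp [ind]
    · simp [ind, hc]
  simp_rw [this]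
  rw [Finset.sum_ite_eq' Finset.univ c₀]
  simp

noncomputable def obsKer (X : Type*) [Fintype X] [DecidableEq X] (T : ℕ) :
    Submodule ℝ ((Fin T → X) → ℝ) where
  carrier := {ν | MZero ν}
  zero_mem' := by
    constructor
    · intro h x; simp
    · intro i h x y; simp
  add_mem' := by
    rintro a b ⟨ha1, ha2⟩ ⟨hb1, hb2⟩
    have key : ∀ (P : (Fin T → X) → Prop) (_ : DecidablePred P),
        (∑ c : Fin T → X, if P c then (a + b) c else 0) =
        (∑ c : Fin T → X, if P c then a c else 0) +
        (∑ c : Fin T → X, if P c then b c else 0) := by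
      intro P inst
      rw [← Finset.sum_add_distrib]
      refine Finset.sum_congr rfl fun c _ => ?_
      by_cases h : P c <;> simp [h]
    constructor
    · intro h x
      rw [key _ (fun _ => inferInstance), ha1 h x, hb1 h x, add_zero]
    · intro i h x y
      rw [key _ (fun _ => inferInstance), ha2 i h x y, hb2 i h x y, add_zero]
  smul_mem' := by
    rintro r a ⟨ha1, ha2⟩
    have key : ∀ (P : (Fin T → X) → Prop) (_ : DecidablePred P),
        (∑ c : Fin T → X, if P c then (r • a) c else 0) =
        r * (∑ c : Fin T → X, if P c then a c else 0) := by
      intro P inst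
      rw [Finset.mul_sum]
      refine Finset.sum_congr rfl fun c _ => ?_
      by_cases h : P c <;> simp [h]
    constructor
    · intro h x
      rw [key _ (fun _ => inferInstance), ha1 h x, mul_zero]
    · intro i h x y
      rw [key _ (fun _ => inferInstance), ha2 i h x y, mul_zero]

lemma swap_mem_obsKer {R : (Fin T → X) → ℝ} (hR : IsRyserSwapDC R) :
    R ∈ obsKer X T := by
  obtain ⟨m, hm1, hm, c₁, c₂, c₁', c₂', hcompat, h1', h2', hRe⟩ := hR
  have marg : ∀ (P : (Fin T → X) → Prop) (_ : DecidablePred P),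
      (∑ c : Fin T → X, if P c then R c else 0) =
      (if P c₁' then (1:ℝ) else 0) + (if P c₂' then 1 else 0)
        - (if P c₁ then 1 else 0) - (if P c₂ then 1 else 0) := by
    intro P inst
    have hv : ∀ c, R c = ind c₁' c + ind c₂' c - ind c₁ c - ind c₂ c := by
      intro c; rw [hRe]; simp
    simp_rw [hv]
    have exp : ∀ c, (if P c then ind c₁' c + ind c₂' c - ind c₁ c - ind c₂ c else 0) =
        (if P c then ind c₁' c else 0) + (if P c then ind c₂' c else 0)
          - (if P c then ind c₁ c else 0) - (if P c then ind c₂ c else 0) := by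
      intro c; by_cases h : P c <;> simp [h]
    simp_rw [exp]
    rw [Finset.sum_sub_distrib, Finset.sum_sub_distrib, Finset.sum_add_distrib,
      sum_ite_ind P inst c₁', sum_ite_ind P inst c₂', sum_ite_ind P inst c₁,
      sum_ite_ind P inst c₂]
  constructor
  · intro h x
    rw [marg _ (fun _ => inferInstance)]
    have e1 : c₁' ⟨0, h⟩ = c₂ ⟨0, h⟩ := by rw [h1']; exact if_pos (show (0:ℕ) < m from hm1)
    have e2 : c₂' ⟨0, h⟩ = c₁ ⟨0, h⟩ := by rw [h2']; exact if_pos (show (0:ℕ) < m from hm1)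
    simp only [e1, e2]; ring
  · intro i h x y
    rw [marg _ (fun _ => inferInstance)]
    have hva : (((⟨i, Nat.lt_of_succ_lt h⟩ : Fin T)) : ℕ) = i := rfl
    have hvb : (((⟨i + 1, h⟩ : Fin T)) : ℕ) = i + 1 := rfl
    rcases lt_trichotomy (i + 1) m with hlt | heq | hgt
    · have e1a : c₁' ⟨i, Nat.lt_of_succ_lt h⟩ = c₂ ⟨i, Nat.lt_of_succ_lt h⟩ := by
        rw [h1']; exact if_pos (by rw [hva]; omega)
      have e1b : c₁' ⟨i + 1, h⟩ = c₂ ⟨i + 1, h⟩ := by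
        rw [h1']; exact if_pos (by rw [hvb]; omega)
      have e2a : c₂' ⟨i, Nat.lt_of_succ_lt h⟩ = c₁ ⟨i, Nat.lt_of_succ_lt h⟩ := by
        rw [h2']; exact if_pos (by rw [hva]; omega)
      have e2b : c₂' ⟨i + 1, h⟩ = c₁ ⟨i + 1, h⟩ := by
        rw [h2']; exact if_pos (by rw [hvb]; omega)
      simp only [e1a, e1b, e2a, e2b]; ring
    · have hab : (⟨i, Nat.lt_of_succ_lt h⟩ : Fin T) = ⟨m - 1, by omega⟩ :=
        Fin.ext (show i = m - 1 by omega)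
      have e1a : c₁' ⟨i, Nat.lt_of_succ_lt h⟩ = c₁ ⟨i, Nat.lt_of_succ_lt h⟩ := by
        rw [h1', if_pos (by rw [hva]; omega), hab]
        exact hcompat.symm
      have e1b : c₁' ⟨i + 1, h⟩ = c₁ ⟨i + 1, h⟩ := by
        rw [h1']; exact if_neg (by rw [hvb]; omega)
      have e2a : c₂' ⟨i, Nat.lt_of_succ_lt h⟩ = c₂ ⟨i, Nat.lt_of_succ_lt h⟩ := by
        rw [h2', if_pos (by rw [hva]; omega), hab]
        exact hcompat
      have e2b : c₂' ⟨i + 1, h⟩ = c₂ ⟨i + 1, h⟩ := by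
        rw [h2']; exact if_neg (by rw [hvb]; omega)
      simp only [e1a, e1b, e2a, e2b]; ring
    · have e1a : c₁' ⟨i, Nat.lt_of_succ_lt h⟩ = c₁ ⟨i, Nat.lt_of_succ_lt h⟩ := by
        rw [h1']; exact if_neg (by rw [hva]; omega)
      have e1b : c₁' ⟨i + 1, h⟩ = c₁ ⟨i + 1, h⟩ := by
        rw [h1']; exact if_neg (by rw [hvb]; omega)
      have e2a : c₂' ⟨i, Nat.lt_of_succ_lt h⟩ = c₂ ⟨i, Nat.lt_of_succ_lt h⟩ := by
        rw [h2']; exact if_neg (by rw [hva]; omega)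
      have e2b : c₂' ⟨i + 1, h⟩ = c₂ ⟨i + 1, h⟩ := by
        rw [h2']; exact if_neg (by rw [hvb]; omega)
      simp only [e1a, e1b, e2a, e2b]; ring

lemma ryser_le_obsKer : RyserSpaceDC X T ≤ obsKer X T :=
  Submodule.span_le.mpr fun _ hR => swap_mem_obsKer hR

lemma fin_mk_zero {n : ℕ} (h : 0 < n + 1) : (⟨0, h⟩ : Fin (n + 1)) = 0 :=
  Fin.ext (by simp)

lemma cons_mk_zero (x : X) (q : Fin (T + 1) → X) (h : 0 < T + 2) :
    (Fin.cons x q : Fin (T + 2) → X) ⟨0, h⟩ = x := by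
  rw [fin_mk_zero h, Fin.cons_zero]

lemma cons_mk_succ (x : X) (q : Fin (T + 1) → X) {i : ℕ} (h : i + 1 < T + 2) :
    (Fin.cons x q : Fin (T + 2) → X) ⟨i + 1, h⟩ = q ⟨i, by omega⟩ := by
  rw [mk_succ h, Fin.cons_succ]

noncomputable def liftMap (xs : X) (T : ℕ) :
    ((Fin (T + 1) → X) → ℝ) →ₗ[ℝ] ((Fin (T + 2) → X) → ℝ) where
  toFun w := ∑ q : Fin (T + 1) → X, w q • ind (Fin.cons xs q)
  map_add' a b := by
    simp only [Pi.add_apply, add_smul]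
    rw [Finset.sum_add_distrib]
  map_smul' r a := by
    simp only [Pi.smul_apply, smul_eq_mul, RingHom.id_apply, mul_smul, Finset.smul_sum]

lemma liftMap_apply (xs : X) (w : (Fin (T + 1) → X) → ℝ) :
    liftMap xs T w = ∑ q : Fin (T + 1) → X, w q • ind (Fin.cons xs q) := rfl

lemma liftMap_ind (xs : X) (q₀ : Fin (T + 1) → X) :
    liftMap xs T (ind q₀) = ind (Fin.cons xs q₀) := by
  rw [liftMap_apply]
  have : ∀ q : Fin (T + 1) → X, ind q₀ q • ind (Fin.cons xs q) =
      if q = q₀ then ind (Fin.cons xs q) else 0 := by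
    intro q; unfold ind; split <;> simp
  simp_rw [this]
  rw [Finset.sum_ite_eq' Finset.univ q₀]
  simp

lemma lift_swap (xs : X) {w : (Fin (T + 1) → X) → ℝ} (hw : IsRyserSwapDC w) :
    IsRyserSwapDC (liftMap xs T w) := by
  obtain ⟨m, hm1, hm, q₁, q₂, q₁', q₂', hcompat, h1, h2, hRe⟩ := hw
  refine ⟨m + 1, by omega, by omega, Fin.cons xs q₁, Fin.cons xs q₂,
    Fin.cons xs q₁', Fin.cons xs q₂', ?_, ?_, ?_, ?_⟩
  · have e : (⟨m + 1 - 1, by omega⟩ : Fin (T + 2)) = ⟨(m - 1) + 1, by omega⟩ :=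
      Fin.ext (by simp only [Fin.val_mk]; omega)
    rw [e, cons_mk_succ, cons_mk_succ]
    exact hcompat
  · intro j
    induction j using Fin.cases with
    | zero => simp
    | succ i =>
      simp only [Fin.cons_succ, Fin.val_succ, h1 i, Nat.succ_lt_succ_iff]
  · intro j
    induction j using Fin.cases with
    | zero => simp
    | succ i =>
      simp only [Fin.cons_succ, Fin.val_succ, h2 i, Nat.succ_lt_succ_iff]
  · rw [hRe]
    simp only [map_sub, map_add, liftMap_ind]

lemma lift_mem (xs : X) {w : (Fin (T + 1) → X) → ℝ} (hw : w ∈ RyserSpaceDC X (T + 1)) :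
    liftMap xs T w ∈ RyserSpaceDC X (T + 2) := by
  have h1 : liftMap xs T w ∈ Submodule.map (liftMap xs T) (RyserSpaceDC X (T + 1)) :=
    Submodule.mem_map_of_mem hw
  rw [RyserSpaceDC, Submodule.map_span] at h1
  refine Submodule.span_le.mpr ?_ h1
  rintro v ⟨w', hw', rfl⟩
  exact Submodule.subset_span (lift_swap xs hw')

noncomputable def sigmaV (xs x : X) (q : Fin (T + 1) → X) : (Fin (T + 2) → X) → ℝ :=
  ind (Fin.cons xs q) + ind (Fin.cons x (Fin.cons (q 0) (fun _ : Fin T => xs)))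
    - ind (Fin.cons x q) - ind (Fin.cons xs (Fin.cons (q 0) (fun _ : Fin T => xs)))

lemma sigma_mem (xs x : X) (q : Fin (T + 1) → X) :
    sigmaV xs x q ∈ RyserSpaceDC X (T + 2) := by
  cases T with
  | zero =>
    have hq : Fin.cons (q 0) (fun _ : Fin 0 => xs) = q := by
      funext j
      have hj : j = 0 := Fin.ext (by omega)
      rw [hj, Fin.cons_zero]
    have e : sigmaV xs x q = 0 := by
      unfold sigmaV; rw [hq]; abel
    rw [e]; exact zero_mem _
  | succ S =>
    refine Submodule.subset_span
      ⟨2, by omega, by omega, Fin.cons x q,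
        Fin.cons xs (Fin.cons (q 0) (fun _ : Fin (S+1) => xs)),
        Fin.cons xs q, Fin.cons x (Fin.cons (q 0) (fun _ : Fin (S+1) => xs)),
        ?_, ?_, ?_, ?_⟩
    · have e : (⟨2 - 1, by omega⟩ : Fin (S + 3)) = ⟨0 + 1, by omega⟩ := rfl
      rw [e, cons_mk_succ, cons_mk_succ, fin_mk_zero, Fin.cons_zero]
    · intro j
      induction j using Fin.cases with
      | zero => simp
      | succ i =>
        simp only [Fin.cons_succ, Fin.val_succ]
        by_cases hi : (i : ℕ) < 1
        · have : i = 0 := Fin.ext (by simp only [Fin.val_zero]; omega)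
          subst this
          rw [if_pos (by simp), Fin.cons_zero]
        · rw [if_neg (by omega)]
    · intro j
      induction j using Fin.cases with
      | zero => simp
      | succ i =>
        simp only [Fin.cons_succ, Fin.val_succ]
        by_cases hi : (i : ℕ) < 1
        · have : i = 0 := Fin.ext (by simp only [Fin.val_zero]; omega)
          subst this
          rw [if_pos (by simp), Fin.cons_zero]
        · rw [if_neg (by omega)]
    · unfold sigmaV; abel

lemma ite_sum {M : Type*} [AddCommMonoid M] {P : Prop} [Decidable P] (f : X → M) :
    (if P then ∑ x : X, f x else 0) = ∑ x : X, if P then f x else 0 := by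
  split <;> simp

lemma key : ∀ (T : ℕ) (ν : (Fin (T + 1) → X) → ℝ), MZero ν → ν ∈ RyserSpaceDC X (T + 1) := by
  intro T
  induction T with
  | zero =>
    intro ν hν
    have h0 : (0:ℕ) < 0 + 1 := Nat.one_pos
    have hz : ν = 0 := by
      funext c
      simp only [Pi.zero_apply]
      have h := hν.1 h0 (c ⟨0, h0⟩)
      have conv : ∀ c' : Fin (0+1) → X, (if c' ⟨0, h0⟩ = c ⟨0, h0⟩ then ν c' else 0)
          = if c' = c then ν c' else 0 := by
        intro c'
        refine if_congr ⟨fun hh => ?_, fun hh => by rw [hh]⟩ rfl rfl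
        funext j
        have hj : j = ⟨0, h0⟩ := Fin.ext (by omega)
        rw [hj]; exact hh
      rw [Finset.sum_congr rfl (fun c' _ => conv c'), Finset.sum_ite_eq' Finset.univ c ν] at h
      simpa using h
    rw [hz]; exact zero_mem _
  | succ S IH =>
    intro ν hν
    rcases isEmpty_or_nonempty X with hX | hX
    · have hz : ν = 0 := funext fun c => (hX.false (c 0)).elim
      rw [hz]; exact zero_mem _
    obtain ⟨xs⟩ := hX
    -- the first-pair marginal of ν vanishes
    have hE : ∀ x y : X,
        (∑ q : Fin (S + 1) → X, if q 0 = y then ν (Fin.cons x q) else 0) = 0 := by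
      intro x y
      have h := hν.2 0 (by omega) x y
      rw [sum_cons] at h
      simp only [cons_mk_succ, fin_mk_zero, Fin.cons_zero] at h
      simp_rw [ite_and, ← ite_sum] at h
      rw [Finset.sum_ite_eq' Finset.univ x] at h
      simpa using h
    -- the shifted aggregate measure has zero marginals
    have hmzb : MZero (fun q : Fin (S + 1) → X => ∑ x : X, ν (Fin.cons x q)) := by
      constructor
      · intro h y
        simp only [fin_mk_zero]
        simp_rw [ite_sum]
        rw [Finset.sum_comm]
        exact Finset.sum_eq_zero fun x _ => hE x y
      · intro i h x y
        have hh := hν.2 (i + 1) (by omega) x y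
        rw [sum_cons] at hh
        simp only [cons_mk_succ] at hh
        rw [Finset.sum_comm] at hh
        simp_rw [ite_sum]
        exact hh
    -- main decomposition
    have h1 : (∑ c : Fin (S + 2) → X, ν c • ind c)
        = ∑ x : X, ∑ q : Fin (S + 1) → X, ν (Fin.cons x q) • ind (Fin.cons x q) :=
      sum_cons _
    have hD : (∑ x : X, ∑ q : Fin (S + 1) → X, ν (Fin.cons x q) • ind (Fin.cons x q)) = ν := by
      rw [← h1]; exact sum_func_smul_ind ν
    have hL : (∑ x : X, ∑ q : Fin (S + 1) → X, ν (Fin.cons x q) • ind (Fin.cons xs q))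
        = liftMap xs S (fun q : Fin (S + 1) → X => ∑ x : X, ν (Fin.cons x q)) := by
      rw [Finset.sum_comm, liftMap_apply]
      exact Finset.sum_congr rfl fun q _ => (Finset.sum_smul).symm
    have hA : (∑ x : X, ∑ q : Fin (S + 1) → X,
        ν (Fin.cons x q) • ind (Fin.cons x (Fin.cons (q 0) (fun _ : Fin S => xs)))) = 0 := by
      refine Finset.sum_eq_zero fun x _ => ?_
      rw [← Finset.sum_fiberwise Finset.univ (fun q : Fin (S + 1) → X => q 0)
        (fun q => ν (Fin.cons x q) • ind (Fin.cons x (Fin.cons (q 0) (fun _ : Fin S => xs))))]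
      refine Finset.sum_eq_zero fun y _ => ?_
      have hcg : ∀ q ∈ Finset.univ.filter (fun q : Fin (S + 1) → X => q 0 = y),
          ν (Fin.cons x q) • ind (Fin.cons x (Fin.cons (q 0) (fun _ : Fin S => xs)))
          = ν (Fin.cons x q) • ind (Fin.cons x (Fin.cons y (fun _ : Fin S => xs))) := by
        intro q hq
        rw [(Finset.mem_filter.mp hq).2]
      rw [Finset.sum_congr rfl hcg, ← Finset.sum_smul, Finset.sum_filter, hE x y, zero_smul]
    have hB : (∑ x : X, ∑ q : Fin (S + 1) → X,
        ν (Fin.cons x q) • ind (Fin.cons xs (Fin.cons (q 0) (fun _ : Fin S => xs)))) = 0 := by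
      rw [Finset.sum_comm]
      have step : ∀ q : Fin (S + 1) → X,
          (∑ x : X, ν (Fin.cons x q) • ind (Fin.cons xs (Fin.cons (q 0) (fun _ : Fin S => xs))))
          = (∑ x : X, ν (Fin.cons x q)) • ind (Fin.cons xs (Fin.cons (q 0) (fun _ : Fin S => xs))) :=
        fun q => (Finset.sum_smul).symm
      rw [Finset.sum_congr rfl fun q _ => step q]
      rw [← Finset.sum_fiberwise Finset.univ (fun q : Fin (S + 1) → X => q 0)
        (fun q => (∑ x : X, ν (Fin.cons x q)) • ind (Fin.cons xs (Fin.cons (q 0) (fun _ : Fin S => xs))))]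
      refine Finset.sum_eq_zero fun y _ => ?_
      have hcg : ∀ q ∈ Finset.univ.filter (fun q : Fin (S + 1) → X => q 0 = y),
          (∑ x : X, ν (Fin.cons x q)) • ind (Fin.cons xs (Fin.cons (q 0) (fun _ : Fin S => xs)))
          = (∑ x : X, ν (Fin.cons x q)) • ind (Fin.cons xs (Fin.cons y (fun _ : Fin S => xs))) := by
        intro q hq
        rw [(Finset.mem_filter.mp hq).2]
      rw [Finset.sum_congr rfl hcg, ← Finset.sum_smul, Finset.sum_filter]
      have hb0 := hmzb.1 (by omega) y
      simp only [fin_mk_zero] at hb0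
      rw [hb0, zero_smul]
    have expand : (∑ x : X, ∑ q : Fin (S + 1) → X, ν (Fin.cons x q) • sigmaV xs x q)
        = (∑ x : X, ∑ q : Fin (S + 1) → X, ν (Fin.cons x q) • ind (Fin.cons xs q))
          + (∑ x : X, ∑ q : Fin (S + 1) → X,
              ν (Fin.cons x q) • ind (Fin.cons x (Fin.cons (q 0) (fun _ : Fin S => xs))))
          - (∑ x : X, ∑ q : Fin (S + 1) → X, ν (Fin.cons x q) • ind (Fin.cons x q))
          - (∑ x : X, ∑ q : Fin (S + 1) → X,
              ν (Fin.cons x q) • ind (Fin.cons xs (Fin.cons (q 0) (fun _ : Fin S => xs)))) := by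
      unfold sigmaV
      simp only [smul_add, smul_sub, Finset.sum_add_distrib, Finset.sum_sub_distrib]
    have main : ν = liftMap xs S (fun q : Fin (S + 1) → X => ∑ x : X, ν (Fin.cons x q))
        - ∑ x : X, ∑ q : Fin (S + 1) → X, ν (Fin.cons x q) • sigmaV xs x q := by
      rw [expand, hA, hB, hL, hD]
      abel
    rw [main]
    refine sub_mem (lift_mem xs (IH _ hmzb)) ?_
    exact sum_mem fun x _ => sum_mem fun q _ => Submodule.smul_mem _ _ (sigma_mem xs x q)

lemma main_iff (μ μ' : (Fin T → X) → ℝ) (hμ : IsDist μ) (hμ' : IsDist μ') :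
    ObsEquivDC μ μ' ↔ μ - μ' ∈ RyserSpaceDC X T := by
  constructor
  · intro hobs
    have hmz : MZero (μ - μ') := (obs_iff_mzero μ μ').mp hobs
    cases T with
    | zero =>
      have hee : μ = μ' := by
        funext c
        have h1 : μ c = 1 := by
          have h := hμ.2
          rw [Fintype.sum_unique] at h
          rw [Subsingleton.elim c default]; exact h
        have h2 : μ' c = 1 := by
          have h := hμ'.2
          rw [Fintype.sum_unique] at h
          rw [Subsingleton.elim c default]; exact h
        rw [h1, h2]
      rw [hee, sub_self]; exact zero_mem _
    | succ S => exact key S (μ - μ') hmz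
  · intro hmem
    exact (obs_iff_mzero μ μ').mpr (ryser_le_obsKer hmem)

theorem statement9 :
    (∀ μ μ' : (Fin T → X) → ℝ, IsDist μ → IsDist μ' →
      (ObsEquivDC μ μ' ↔ μ - μ' ∈ RyserSpaceDC X T)) ∧
    (∀ M : Set ((Fin T → X) → ℝ), (∀ μ ∈ M, IsDist μ) → ∀ μ ∈ M,
      {ν | ν ∈ M ∧ ObsEquivDC μ ν} =
        {ν | (∃ r ∈ RyserSpaceDC X T, ν = μ + r) ∧ ν ∈ M}) := by
  constructor
  · exact fun μ μ' hμ hμ' => main_iff μ μ' hμ hμ'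
  · intro M hM μ hμ
    ext ν
    simp only [Set.mem_setOf_eq]
    constructor
    · rintro ⟨hνM, hobs⟩
      refine ⟨⟨ν - μ, ?_, by abel⟩, hνM⟩
      have h1 := (main_iff μ ν (hM μ hμ) (hM ν hνM)).mp hobs
      have h2 : -(μ - ν) ∈ RyserSpaceDC X T := neg_mem h1
      simpa using h2
    · rintro ⟨⟨r, hr, rfl⟩, hνM⟩
      refine ⟨hνM, ?_⟩
      refine (main_iff μ (μ + r) (hM μ hμ) (hM _ hνM)).mpr ?_
      have h3 : μ - (μ + r) = -r := by abel
      rw [h3]; exact neg_mem hr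

end Stmt9
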